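/- If M = p is a prime number with p ≡ 1 (mod 4), or M = 2, then the fundamental unit of K = ℚ(√M) has norm N(ε_K) = −1. -/

import Mathlib

open NumberField

/-- The real quadratic field `K = ℚ(√M)`, realized inside `ℝ`. -/
noncomputable def Ksqrt (M : ℕ) : IntermediateField ℚ ℝ :=
  IntermediateField.adjoin ℚ {Real.sqrt M}

/-- `ε` is the fundamental unit of `ℚ(√M)`: `ε > 1` and `ε` is minimal among units `> 1`. -/
def IsFundamentalUnit (M : ℕ) (ε : (𝓞 (Ksqrt M))ˣ) : Prop :=
  1 < (((ε : 𝓞 (Ksqrt M)) : Ksqrt M) : ℝ) ∧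
    ∀ u : (𝓞 (Ksqrt M))ˣ, 1 < (((u : 𝓞 (Ksqrt M)) : Ksqrt M) : ℝ) →
      (((ε : 𝓞 (Ksqrt M)) : Ksqrt M) : ℝ) ≤ (((u : 𝓞 (Ksqrt M)) : Ksqrt M) : ℝ)

open IntermediateField Polynomial

lemma nat_sq_of_coprime {a b c : ℕ} (h : Nat.Coprime a b) (heq : a * b = c ^ 2) :
    ∃ a0 : ℕ, a = a0 ^ 2 := by
  refine exists_eq_pow_of_mul_eq_pow (α := ℕ) ?_ heq
  rw [Nat.isUnit_iff]
  exact Nat.coprime_iff_gcd_eq_one.mp h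

lemma pell_neg_one {p : ℕ} (hp : p.Prime) (h4 : p % 4 = 1) :
    ∃ a b : ℕ, a ^ 2 + 1 = p * b ^ 2 := by
  have hodd : p % 2 = 1 := by omega
  -- existence of a nontrivial Pell solution over ℤ, transferred to ℕ
  have hS : ∃ x : ℕ, ∃ y : ℕ, 0 < y ∧ x ^ 2 = p * y ^ 2 + 1 := by
    obtain ⟨x, y, hxy, hy⟩ := Pell.exists_of_not_isSquare (d := (p : ℤ))
      (by exact_mod_cast hp.pos) (by rw [Int.isSquare_natCast_iff]; exact hp.prime.not_isSquare)
    refine ⟨x.natAbs, y.natAbs, ?_, ?_⟩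
    · simpa [Int.natAbs_pos] using hy
    · have : (x.natAbs : ℤ) ^ 2 = (p : ℤ) * (y.natAbs : ℤ) ^ 2 + 1 := by
        rw [Int.natAbs_sq, Int.natAbs_sq]
        linarith
      exact_mod_cast this
  classical
  have hspec := Nat.find_spec hS
  set x := Nat.find hS with hxdef
  obtain ⟨y, hy, hxy⟩ := hspec
  -- x is odd
  have hx2 : x % 2 = 1 := by
    rcases Nat.even_or_odd x with ⟨k, hk⟩ | hox
    · exfalso
      rcases Nat.even_or_odd y with ⟨m, hm⟩ | ⟨m, hm⟩
      · have h1 : (k + k) ^ 2 = 4 * k ^ 2 := by ring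
        have h2 : p * (m + m) ^ 2 = 4 * (p * m ^ 2) := by ring
        rw [hk, hm, h1, h2] at hxy
        omega
      · have h1 : (k + k) ^ 2 = 4 * k ^ 2 := by ring
        have h2 : p * (2 * m + 1) ^ 2 = 4 * (p * (m ^ 2 + m)) + p := by ring
        rw [hk, hm, h1, h2] at hxy
        omega
    · exact Nat.odd_iff.mp hox
  obtain ⟨s, hs⟩ : ∃ s, x = 2 * s + 1 := ⟨x / 2, by omega⟩
  -- y is even
  have hyev : y % 2 = 0 := by
    rcases Nat.even_or_odd y with ⟨m, hm⟩ | ⟨m, hm⟩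
    · omega
    · exfalso
      have h1 : (2 * s + 1) ^ 2 = 4 * (s ^ 2 + s) + 1 := by ring
      have h2 : p * (2 * m + 1) ^ 2 = 4 * (p * (m ^ 2 + m)) + p := by ring
      rw [hs, hm, h1, h2] at hxy
      omega
  obtain ⟨z, hz⟩ : ∃ z, y = 2 * z := ⟨y / 2, by omega⟩
  have hzpos : 0 < z := by omega
  -- s * (s+1) = p * z ^ 2
  have key : s * (s + 1) = p * z ^ 2 := by
    have h1 : (2 * s + 1) ^ 2 = 4 * (s * (s + 1)) + 1 := by ring
    have h2 : p * (2 * z) ^ 2 = 4 * (p * z ^ 2) := by ring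
    rw [hs, hz, h1, h2] at hxy
    omega
  have hcop : Nat.Coprime s (s + 1) := Nat.coprime_self_add_right.mpr (Nat.coprime_one_right s)
  have hpdvd : p ∣ s * (s + 1) := key ▸ Dvd.intro _ rfl
  rcases (Nat.Prime.dvd_mul hp).mp hpdvd with hps | hpt
  · -- p ∣ s : contradiction with minimality
    exfalso
    obtain ⟨s₀, hs₀⟩ := hps
    have key2 : s₀ * (s + 1) = z ^ 2 := by
      have : p * (s₀ * (s + 1)) = p * z ^ 2 := by rw [← key, hs₀]; ring
      exact Nat.eq_of_mul_eq_mul_left hp.pos this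
    have hcop2 : Nat.Coprime s₀ (s + 1) :=
      Nat.Coprime.coprime_dvd_left (hs₀ ▸ Dvd.intro_left _ rfl) hcop
    obtain ⟨a, ha⟩ := nat_sq_of_coprime hcop2 key2
    obtain ⟨b, hb⟩ := nat_sq_of_coprime (Nat.Coprime.symm hcop2) (by rw [mul_comm]; exact key2)
    -- b^2 = p * a^2 + 1
    have hb2 : b ^ 2 = p * a ^ 2 + 1 := by rw [← hb, ← ha, ← hs₀]
    have hapos : 0 < a := by
      rcases Nat.eq_zero_or_pos a with h0 | h; swap; exact h
      exfalso
      have : s = 0 := by rw [hs₀, ha, h0]; ring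
      have hx1 : x = 1 := by omega
      rw [hx1] at hxy
      have hpy : p * y ^ 2 = 0 := by omega
      have hppos := hp.pos
      have hy2 : y ^ 2 = 0 := by
        rcases Nat.mul_eq_zero.mp hpy with h | h
        · omega
        · exact h
      have : y = 0 := by simpa using hy2
      omega
    have hbx : b < x := by
      have h1 : b ^ 2 = s + 1 := by rw [← hb]
      have hb2' : 2 ≤ b := by nlinarith [hp.two_le]
      have : b < b ^ 2 := by nlinarith
      omega
    exact Nat.find_min hS hbx ⟨a, hapos, hb2⟩
  · -- p ∣ s + 1 : success
    obtain ⟨t₀, ht₀⟩ := hpt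
    have key2 : s * t₀ = z ^ 2 := by
      have : p * (s * t₀) = p * z ^ 2 := by rw [← key, ht₀]; ring
      exact Nat.eq_of_mul_eq_mul_left hp.pos this
    have hcop2 : Nat.Coprime s t₀ :=
      Nat.Coprime.coprime_dvd_right (ht₀ ▸ Dvd.intro_left _ rfl) hcop
    obtain ⟨a, ha⟩ := nat_sq_of_coprime hcop2 key2
    obtain ⟨b, hb⟩ := nat_sq_of_coprime (Nat.Coprime.symm hcop2) (by rw [mul_comm]; exact key2)
    exact ⟨a, b, by rw [← ha, ← hb, ← ht₀]⟩


variable {M : ℕ}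

namespace KsqrtAux

noncomputable def θ (M : ℕ) : ℝ := Real.sqrt M

lemma theta_mem (M : ℕ) : θ M ∈ Ksqrt M := IntermediateField.subset_adjoin ℚ _ rfl

noncomputable def θK (M : ℕ) : Ksqrt M := ⟨θ M, theta_mem M⟩

lemma theta_sq (M : ℕ) : θ M ^ 2 = M := Real.sq_sqrt (by positivity)

lemma thetaK_sq (M : ℕ) : (θK M) ^ 2 = algebraMap ℚ (Ksqrt M) (M : ℚ) := by
  apply Subtype.ext
  push_cast
  exact theta_sq M

lemma theta_irr (hp : M.Prime) : Irrational (θ M) := hp.irrational_sqrt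

lemma minpoly_theta (hp : M.Prime) : minpoly ℚ (θ M) = X ^ 2 - C (M : ℚ) := by
  have hirr : Irreducible (X ^ 2 - C (M : ℚ)) := by
    refine X_pow_sub_C_irreducible_of_prime Nat.prime_two (fun b hb => ?_)
    have : IsSquare ((M : ℚ)) := ⟨b, by rw [← hb]; ring⟩
    rw [Rat.isSquare_natCast_iff] at this
    exact hp.prime.not_isSquare this
  refine (minpoly.eq_of_irreducible_of_monic hirr ?_ ?_).symm
  · simp [theta_sq M]
  · apply monic_X_pow_sub_C <;> norm_num

lemma isIntegral_theta : IsIntegral ℚ (θ M) := by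
  refine ⟨X ^ 2 - C (M : ℚ), by apply monic_X_pow_sub_C <;> norm_num, ?_⟩
  simp [eval₂_sub, theta_sq M]

end KsqrtAux

noncomputable def B (hp : M.Prime) : PowerBasis ℚ (Ksqrt M) :=
  IntermediateField.adjoin.powerBasis (KsqrtAux.isIntegral_theta (M := M))

lemma B_dim (hp : M.Prime) : (B hp).dim = 2 := by
  show (minpoly ℚ (KsqrtAux.θ M)).natDegree = 2
  rw [KsqrtAux.minpoly_theta hp]
  compute_degree!

lemma B_gen (hp : M.Prime) : (B hp).gen = KsqrtAux.θK M := rfl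

noncomputable def bb (hp : M.Prime) : Module.Basis (Fin 2) ℚ (Ksqrt M) :=
  (B hp).basis.reindex (finCongr (B_dim hp))

lemma bb_apply (hp : M.Prime) (i : Fin 2) : bb hp i = (KsqrtAux.θK M) ^ (i : ℕ) := by
  rw [bb, Module.Basis.reindex_apply, PowerBasis.coe_basis, B_gen]
  congr 1

lemma norm_formula (hp : M.Prime) (q r : ℚ) :
    Algebra.norm ℚ (q • (1 : Ksqrt M) + r • KsqrtAux.θK M) = q ^ 2 - M * r ^ 2 := by
  classical
  set b := bb hp
  set x := q • (1 : Ksqrt M) + r • KsqrtAux.θK M with hx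
  have hb0 : b 0 = 1 := by simpa using bb_apply hp 0
  have hb1 : b 1 = KsqrtAux.θK M := by simpa using bb_apply hp 1
  have hmul0 : x * b 0 = q • b 0 + r • b 1 := by
    rw [hb0, hb1, mul_one]
  have hmul1 : x * b 1 = (r * (M : ℚ)) • b 0 + q • b 1 := by
    rw [hb0, hb1, hx]
    simp only [Algebra.smul_def, map_mul, mul_one]
    linear_combination (algebraMap ℚ (Ksqrt M) r) * KsqrtAux.thetaK_sq M
  rw [Algebra.norm_eq_matrix_det b x, Matrix.det_fin_two]
  have e0 : ∀ (j : Fin 2) (α β : ℚ), x * b j = α • b 0 + β • b 1 →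
      (Algebra.leftMulMatrix b x 0 j = α ∧ Algebra.leftMulMatrix b x 1 j = β) := by
    intro j α β h
    constructor <;>
    · rw [Algebra.leftMulMatrix_eq_repr_mul, h]
      simp [Module.Basis.repr_self, Finsupp.single_apply]
  obtain ⟨h00, h10⟩ := e0 0 q r hmul0
  obtain ⟨h01, h11⟩ := e0 1 (r * (M : ℚ)) q hmul1
  rw [h00, h01, h10, h11]
  ring

lemma isIntegral_thetaK : IsIntegral ℤ (KsqrtAux.θK M) := by
  refine ⟨X ^ 2 - C (M : ℤ), by apply monic_X_pow_sub_C; norm_num, ?_⟩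
  have h := KsqrtAux.thetaK_sq M
  simp only [eval₂_sub, eval₂_X_pow, eval₂_C]
  rw [show ((algebraMap ℤ (Ksqrt M)) (M : ℤ)) = algebraMap ℚ (Ksqrt M) (M : ℚ) by
    push_cast; simp [map_natCast], ← h]
  ring

/-- the candidate unit `a + b√M` where `a^2 + 1 = M b^2`. -/
noncomputable def uK (a b : ℕ) : Ksqrt M := (a : Ksqrt M) + (b : Ksqrt M) * KsqrtAux.θK M

lemma uK_integral (a b : ℕ) : IsIntegral ℤ (uK (M := M) a b) := by
  have hn : ∀ n : ℕ, IsIntegral ℤ ((n : Ksqrt M)) := fun n => by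
    simpa using (isIntegral_algebraMap (R := ℤ) (A := Ksqrt M) (x := (n : ℤ)))
  exact IsIntegral.add (hn a) (IsIntegral.mul (hn b) isIntegral_thetaK)

noncomputable def vK (a b : ℕ) : Ksqrt M := (b : Ksqrt M) * KsqrtAux.θK M - (a : Ksqrt M)

lemma vK_integral (a b : ℕ) : IsIntegral ℤ (vK (M := M) a b) := by
  have hn : ∀ n : ℕ, IsIntegral ℤ ((n : Ksqrt M)) := fun n => by
    simpa using (isIntegral_algebraMap (R := ℤ) (A := Ksqrt M) (x := (n : ℤ)))
  exact IsIntegral.sub (IsIntegral.mul (hn b) isIntegral_thetaK) (hn a)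

lemma uv_mul (a b : ℕ) (hab : a ^ 2 + 1 = M * b ^ 2) :
    uK (M := M) a b * vK a b = 1 := by
  rw [uK, vK]
  have h := KsqrtAux.thetaK_sq M
  have h2 : (KsqrtAux.θK M) ^ 2 = (M : Ksqrt M) := by
    rw [h, map_natCast]
  have hcast : ((a : Ksqrt M)) ^ 2 + 1 = (M : Ksqrt M) * (b : Ksqrt M) ^ 2 := by
    exact_mod_cast congrArg (Nat.cast : ℕ → Ksqrt M) hab
  linear_combination (b : Ksqrt M) ^ 2 * h2 - hcast

noncomputable def uO (a b : ℕ) : 𝓞 (Ksqrt M) := ⟨uK a b, uK_integral a b⟩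
noncomputable def vO (a b : ℕ) : 𝓞 (Ksqrt M) := ⟨vK a b, vK_integral a b⟩

noncomputable def uU (a b : ℕ) (hab : a ^ 2 + 1 = M * b ^ 2) : (𝓞 (Ksqrt M))ˣ :=
  Units.mkOfMulEqOne (uO a b) (vO a b) (by
    apply NumberField.RingOfIntegers.ext
    push_cast [uO, vO]
    exact uv_mul a b hab)

lemma uU_norm (hp : M.Prime) (a b : ℕ) (hab : a ^ 2 + 1 = M * b ^ 2) :
    Algebra.norm ℚ ((uU (M := M) a b hab : 𝓞 (Ksqrt M)) : Ksqrt M) = -1 := by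
  have : ((uU (M := M) a b hab : 𝓞 (Ksqrt M)) : Ksqrt M)
      = (a : ℚ) • (1 : Ksqrt M) + (b : ℚ) • KsqrtAux.θK M := by
    show uK a b = _
    rw [uK]
    simp [Algebra.smul_def, map_natCast]
  rw [this, norm_formula hp]
  have : ((a : ℚ)) ^ 2 + 1 = (M : ℚ) * (b : ℚ) ^ 2 := by exact_mod_cast hab
  linarith

lemma norm_unit_pm [FiniteDimensional ℚ (Ksqrt M)] (w : (𝓞 (Ksqrt M))ˣ) :
    Algebra.norm ℚ ((w : 𝓞 (Ksqrt M)) : Ksqrt M) = 1 ∨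
    Algebra.norm ℚ ((w : 𝓞 (Ksqrt M)) : Ksqrt M) = -1 := by
  have hmul : ((w : 𝓞 (Ksqrt M)) : Ksqrt M) * (((w⁻¹ : (𝓞 (Ksqrt M))ˣ) : 𝓞 (Ksqrt M)) : Ksqrt M)
      = 1 := by
    rw [← map_mul (algebraMap (𝓞 (Ksqrt M)) (Ksqrt M)), Units.mul_inv, map_one]
  have hnm : Algebra.norm ℚ ((w : 𝓞 (Ksqrt M)) : Ksqrt M)
      * Algebra.norm ℚ (((w⁻¹ : (𝓞 (Ksqrt M))ˣ) : 𝓞 (Ksqrt M)) : Ksqrt M) = 1 := by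
    rw [← map_mul, hmul, map_one]
  have hint : ∀ v : (𝓞 (Ksqrt M))ˣ, ∃ z : ℤ,
      (z : ℚ) = Algebra.norm ℚ ((v : 𝓞 (Ksqrt M)) : Ksqrt M) := by
    intro v
    exact IsIntegrallyClosed.isIntegral_iff.mp
      (Algebra.isIntegral_norm ℚ (NumberField.RingOfIntegers.isIntegral_coe (v : 𝓞 (Ksqrt M))))
  obtain ⟨z1, hz1⟩ := hint w
  obtain ⟨z2, hz2⟩ := hint w⁻¹
  rw [← hz1, ← hz2] at hnm
  have hz : z1 * z2 = 1 := by exact_mod_cast hnm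
  rcases Int.isUnit_iff.mp (IsUnit.of_mul_eq_one z2 hz) with h | h <;>
    [left; right] <;> rw [← hz1, h] <;> norm_num

/-- real-value ring hom -/
noncomputable def toR (M : ℕ) : 𝓞 (Ksqrt M) →+* ℝ :=
  ((Ksqrt M).val.toRingHom).comp (algebraMap (𝓞 (Ksqrt M)) (Ksqrt M))

lemma toR_apply (t : 𝓞 (Ksqrt M)) : toR M t = ((t : Ksqrt M) : ℝ) := rfl

lemma toR_injective : Function.Injective (toR M) :=
  fun _ _ h => NumberField.RingOfIntegers.coe_injective (Subtype.ext h)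

lemma uU_real_gt_one (hp : M.Prime) (a b : ℕ) (hab : a ^ 2 + 1 = M * b ^ 2) :
    1 < toR M ((uU (M := M) a b hab : 𝓞 (Ksqrt M))) := by
  have hb : 0 < b := by
    rcases Nat.eq_zero_or_pos b with h0 | h
    · simp [h0] at hab
    · exact h
  have ha : 0 < a := by
    rcases Nat.eq_zero_or_pos a with h0 | h
    · exfalso
      rw [h0] at hab
      simp at hab
      nlinarith [hp.two_le, hab, hb]
    · exact h
  have hθ : (1 : ℝ) < Real.sqrt M := by
    rw [show (1:ℝ) = Real.sqrt 1 by simp]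
    exact Real.sqrt_lt_sqrt (by norm_num) (by exact_mod_cast hp.one_lt)
  have heq : toR M ((uU (M := M) a b hab : 𝓞 (Ksqrt M))) = (a : ℝ) + (b : ℝ) * Real.sqrt M := by
    rw [toR_apply]
    show ((uK a b : Ksqrt M) : ℝ) = _
    rw [uK]
    push_cast
    rfl
  rw [heq]
  have h1 : (1:ℝ) ≤ a := by exact_mod_cast ha
  have h2 : (1:ℝ) ≤ b := by exact_mod_cast hb
  nlinarith


/-- If `M = p` is a prime with `p ≡ 1 (mod 4)`, or `M = 2`, then the fundamental unit
of `K = ℚ(√M)` has norm `-1`. -/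
theorem stmt_14 (M : ℕ) (hM : (M.Prime ∧ M % 4 = 1) ∨ M = 2)
    [FiniteDimensional ℚ (Ksqrt M)]
    (ε : (𝓞 (Ksqrt M))ˣ) (hε : IsFundamentalUnit M ε) :
    Algebra.norm ℚ ((ε : 𝓞 (Ksqrt M)) : Ksqrt M) = -1 := by
  classical
  have hp : M.Prime := by
    rcases hM with ⟨h, _⟩ | h
    · exact h
    · rw [h]; exact Nat.prime_two
  obtain ⟨a, b, hab⟩ : ∃ a b : ℕ, a ^ 2 + 1 = M * b ^ 2 := by
    rcases hM with ⟨h, h4⟩ | h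
    · exact pell_neg_one h h4
    · subst h; exact ⟨1, 1, by norm_num⟩
  set u : (𝓞 (Ksqrt M))ˣ := uU a b hab with hu
  have hunorm : Algebra.norm ℚ ((u : 𝓞 (Ksqrt M)) : Ksqrt M) = -1 := uU_norm hp a b hab
  -- suppose norm ε = 1; derive a contradiction
  rcases norm_unit_pm ε with hn1 | hn1; swap
  · exact hn1
  exfalso
  set e : ℝ := toR M (ε : 𝓞 (Ksqrt M)) with he
  have he1 : 1 < e := hε.1
  have hepos : 0 < e := lt_trans one_pos he1
  set uR : ℝ := toR M (u : 𝓞 (Ksqrt M)) with huR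
  have huR1 : 1 < uR := uU_real_gt_one hp a b hab
  -- the inverse of ε has real value e⁻¹
  have hef : e * toR M ((ε⁻¹ : (𝓞 (Ksqrt M))ˣ) : 𝓞 (Ksqrt M)) = 1 := by
    rw [he, ← map_mul, ← Units.val_mul]
    simp
  have hfinv : toR M ((ε⁻¹ : (𝓞 (Ksqrt M))ˣ) : 𝓞 (Ksqrt M)) = e⁻¹ :=
    eq_inv_of_mul_eq_one_right hef
  -- find maximal n with e ^ n ≤ uR
  have hex : ∃ n : ℕ, uR < e ^ n := pow_unbounded_of_one_lt uR he1
  set n₁ := Nat.find hex with hn₁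
  have hlt₁ : uR < e ^ n₁ := Nat.find_spec hex
  have hn₁pos : n₁ ≠ 0 := by
    intro h0
    rw [h0, pow_zero] at hlt₁
    linarith
  set n := n₁ - 1 with hndef
  have hnn : n + 1 = n₁ := by omega
  have hle : e ^ n ≤ uR := by
    by_contra hcon
    push_neg at hcon
    exact Nat.find_min hex (by omega) hcon
  have hlt : uR < e ^ (n + 1) := by rw [hnn]; exact hlt₁
  -- w := u * ε⁻¹ ^ n
  set w : (𝓞 (Ksqrt M))ˣ := u * (ε⁻¹) ^ n with hw
  have hwR : toR M ((w : 𝓞 (Ksqrt M))) = uR * (e⁻¹) ^ n := by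
    rw [hw]
    push_cast
    rw [map_mul, map_pow, hfinv, huR]
  have hpow : 0 < e ^ n := pow_pos hepos n
  have hwR_ge : 1 ≤ toR M ((w : 𝓞 (Ksqrt M))) := by
    rw [hwR, inv_pow, ← div_eq_mul_inv]
    exact (one_le_div hpow).mpr hle
  have hwR_lt : toR M ((w : 𝓞 (Ksqrt M))) < e := by
    rw [hwR, inv_pow, ← div_eq_mul_inv, div_lt_iff₀ hpow]
    calc uR < e ^ (n + 1) := hlt
    _ = e * e ^ n := by ring
  rcases eq_or_lt_of_le hwR_ge with heq | hgt
  · -- w = 1, so u = ε ^ n, contradicting norms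
    have hw1 : (w : 𝓞 (Ksqrt M)) = 1 := toR_injective (by rw [← heq, map_one])
    have hwu : w = 1 := Units.ext hw1
    have hueq : u = ε ^ n := by
      have := hwu
      rw [hw, inv_pow, mul_inv_eq_one] at this
      exact this
    have : Algebra.norm ℚ ((u : 𝓞 (Ksqrt M)) : Ksqrt M)
        = Algebra.norm ℚ ((ε : 𝓞 (Ksqrt M)) : Ksqrt M) ^ n := by
      rw [hueq]
      have hcoe : (((ε ^ n : (𝓞 (Ksqrt M))ˣ) : 𝓞 (Ksqrt M)) : Ksqrt M)
          = (((ε : 𝓞 (Ksqrt M)) : Ksqrt M)) ^ n := by push_cast; rfl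
      rw [hcoe, map_pow]
    rw [hunorm, hn1, one_pow] at this
    norm_num at this
  · -- w is a unit > 1 smaller than ε
    have := hε.2 w hgt
    have : e ≤ toR M ((w : 𝓞 (Ksqrt M))) := this
    linarith
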